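/- Let θ ∈ C¹([0,1]) be positive with ∫₀¹ θ dx ≤ E, let v be continuous with v ≥ c₀ > 0 and ∫₀¹ v dx ≤ V, let β > 0 and η = min{1,β}/2. Then max_{x∈[0,1]} θ(x) ≤ C + C ∫₀¹ (θ^β θ_x²)/(v θ^{1+η}) dx + C max_{x∈[0,1]} θ(x)^{1+η−β} for a constant C depending only on E, V, c₀, β; consequently, if β ≥ 1+η or by Young's inequality in general, max θ ≤ C' (1 + ∫₀¹ (θ^βθ_x²)/(vθ^{1+η}) dx). -/

import Mathlib

open Set Real intervalIntegral

/-- Pointwise AM-GM step. -/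
lemma pt_bound (β η s w T p W : ℝ) (hT : 0 < T) (hW : 0 < W) (hs : 0 < s)
    (hw : (β - 1 - η) / 2 + w / 2 = s - 1) :
    s * (T ^ (s - 1) * |p|) ≤ (s / 2) * (T ^ β * p ^ 2 / (W * T ^ (1 + η)) + W * T ^ w) := by
  set a : ℝ := T ^ ((β - 1 - η) / 2) * |p| / Real.sqrt W with ha
  set b : ℝ := Real.sqrt W * T ^ (w / 2) with hb
  have hsq : 0 < Real.sqrt W := Real.sqrt_pos.2 hW
  have h2 := two_mul_le_add_sq a b
  have hab : a * b = T ^ (s - 1) * |p| := by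
    have h1 : a * b = T ^ ((β - 1 - η) / 2) * T ^ (w / 2) * |p| := by
      rw [ha, hb]; field_simp
    rw [h1, ← Real.rpow_add hT, hw]
  have ha2 : a ^ 2 = T ^ β * p ^ 2 / (W * T ^ (1 + η)) := by
    have h1 : a ^ 2 = (T ^ ((β - 1 - η) / 2)) ^ (2:ℕ) * |p| ^ 2 / (Real.sqrt W) ^ 2 := by
      rw [ha]; ring
    have h2' : (T ^ ((β - 1 - η) / 2)) ^ (2:ℕ) = T ^ (β - (1 + η)) := by
      rw [← Real.rpow_natCast (T ^ ((β - 1 - η) / 2)) 2, ← Real.rpow_mul hT.le]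
      ring_nf
    rw [h1, h2', sq_abs, Real.sq_sqrt hW.le, Real.rpow_sub hT]
    have hd1 : T ^ (1 + η) ≠ 0 := (Real.rpow_pos_of_pos hT _).ne'
    ring
  have hb2 : b ^ 2 = W * T ^ w := by
    have : b ^ 2 = (Real.sqrt W) ^ 2 * (T ^ (w / 2)) ^ (2:ℕ) := by rw [hb]; ring
    rw [this, Real.sq_sqrt hW.le, ← Real.rpow_natCast (T ^ (w / 2)) 2, ← Real.rpow_mul hT.le]
    norm_num
  calc s * (T ^ (s - 1) * |p|) = (s / 2) * (2 * a * b) := by rw [mul_assoc, hab]; ring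
    _ ≤ (s / 2) * (a ^ 2 + b ^ 2) := by
        apply mul_le_mul_of_nonneg_left h2 (by positivity)
    _ = (s / 2) * (T ^ β * p ^ 2 / (W * T ^ (1 + η)) + W * T ^ w) := by rw [ha2, hb2]

/-- Core estimate: `θ(x)^s ≤ E^s + (s/2) (D + ∫ v θ^w)`. -/
lemma core_bound (E c₀ β η s w : ℝ) (hc₀ : 0 < c₀) (hs : 0 < s)
    (hw : (β - 1 - η) / 2 + w / 2 = s - 1)
    (θ θ' v : ℝ → ℝ)
    (hθd : ∀ x ∈ Set.Icc (0:ℝ) 1, HasDerivAt θ (θ' x) x)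
    (hθ'c : ContinuousOn θ' (Set.Icc 0 1))
    (hθpos : ∀ x ∈ Set.Icc (0:ℝ) 1, 0 < θ x)
    (hθE : (∫ x in (0:ℝ)..1, θ x) ≤ E)
    (hvc : ContinuousOn v (Set.Icc 0 1))
    (hvlb : ∀ x ∈ Set.Icc (0:ℝ) 1, c₀ ≤ v x) :
    ∀ x ∈ Set.Icc (0:ℝ) 1,
      θ x ^ s ≤ E ^ s + (s / 2) *
        ((∫ y in (0:ℝ)..1, θ y ^ β * θ' y ^ 2 / (v y * θ y ^ (1 + η)))
          + ∫ y in (0:ℝ)..1, v y * θ y ^ w) := by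
  intro x hx
  have hu : Set.uIcc (0:ℝ) 1 = Set.Icc 0 1 := Set.uIcc_of_le zero_le_one
  have hvpos : ∀ y ∈ Set.Icc (0:ℝ) 1, 0 < v y := fun y hy => hc₀.trans_le (hvlb y hy)
  have hθc : ContinuousOn θ (Set.Icc 0 1) := fun y hy =>
    (hθd y hy).continuousAt.continuousWithinAt
  -- minimum point
  obtain ⟨x₀, hx₀, hmin⟩ := isCompact_Icc.exists_isMinOn (Set.nonempty_Icc.2 zero_le_one) hθc
  rw [isMinOn_iff] at hmin
  have hθint : IntervalIntegrable θ MeasureTheory.volume 0 1 :=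
    (hu ▸ hθc).intervalIntegrable
  have hθ₀E : θ x₀ ≤ E := by
    calc θ x₀ = ∫ _ in (0:ℝ)..1, θ x₀ := by simp
      _ ≤ ∫ y in (0:ℝ)..1, θ y :=
          integral_mono_on zero_le_one intervalIntegrable_const hθint hmin
      _ ≤ E := hθE
  have hE0 : 0 < E := (hθpos x₀ hx₀).trans_le hθ₀E
  -- the derivative of θ^s
  set g' : ℝ → ℝ := fun y => θ' y * s * θ y ^ (s - 1) with hg'def
  have hg : ∀ y ∈ Set.Icc (0:ℝ) 1, HasDerivAt (fun t => θ t ^ s) (g' y) y := fun y hy =>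
    (hθd y hy).rpow_const (Or.inl (hθpos y hy).ne')
  have hg'c : ContinuousOn g' (Set.Icc 0 1) :=
    (hθ'c.mul continuousOn_const).mul
      (hθc.rpow_const fun y hy => Or.inl (hθpos y hy).ne')
  have hg'int : IntervalIntegrable g' MeasureTheory.volume 0 1 := (hu ▸ hg'c).intervalIntegrable
  have habs_c : ContinuousOn (fun y => |g' y|) (Set.Icc 0 1) := hg'c.abs
  have habs_int : IntervalIntegrable (fun y => |g' y|) MeasureTheory.volume 0 1 :=
    (hu ▸ habs_c).intervalIntegrable
  have hsub : Set.uIcc x₀ x ⊆ Set.Icc 0 1 := Set.uIcc_subset_Icc hx₀ hx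
  have hftc : ∫ y in x₀..x, g' y = θ x ^ s - θ x₀ ^ s :=
    integral_eq_sub_of_hasDerivAt (fun y hy => hg y (hsub hy))
      (hg'int.mono_set (hu ▸ hsub))
  -- bound the integral by ∫₀¹ |g'|
  have habs : (∫ y in x₀..x, g' y) ≤ ∫ y in (0:ℝ)..1, |g' y| := by
    have hae : 0 ≤ᶠ[MeasureTheory.ae (MeasureTheory.volume.restrict (Set.Ioc (0:ℝ) 1))]
        fun y => |g' y| := Filter.Eventually.of_forall fun y => abs_nonneg _
    rcases le_total x₀ x with h | h
    · calc (∫ y in x₀..x, g' y) ≤ ∫ y in x₀..x, |g' y| :=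
            integral_mono_on h (hg'int.mono_set (hu ▸ hsub))
              (habs_int.mono_set (hu ▸ hsub)) (fun y _ => le_abs_self _)
        _ ≤ ∫ y in (0:ℝ)..1, |g' y| :=
            integral_mono_interval hx₀.1 h hx.2 hae habs_int
    · have hsub' : Set.uIcc x x₀ ⊆ Set.Icc 0 1 := Set.uIcc_subset_Icc hx hx₀
      calc (∫ y in x₀..x, g' y) = ∫ y in x..x₀, -g' y := by
            rw [integral_neg, ← integral_symm]
        _ ≤ ∫ y in x..x₀, |g' y| :=
            integral_mono_on h ((hg'int.neg).mono_set (hu ▸ hsub'))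
              (habs_int.mono_set (hu ▸ hsub')) (fun y _ => neg_le_abs _)
        _ ≤ ∫ y in (0:ℝ)..1, |g' y| :=
            integral_mono_interval hx.1 h hx₀.2 hae habs_int
  -- pointwise AM-GM
  have hFc : ContinuousOn (fun y => θ y ^ β * θ' y ^ 2 / (v y * θ y ^ (1 + η)))
      (Set.Icc 0 1) := by
    apply ContinuousOn.div
    · exact (hθc.rpow_const fun y hy => Or.inl (hθpos y hy).ne').mul (hθ'c.pow 2)
    · exact hvc.mul (hθc.rpow_const fun y hy => Or.inl (hθpos y hy).ne')
    · intro y hy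
      exact (mul_pos (hvpos y hy) (Real.rpow_pos_of_pos (hθpos y hy) _)).ne'
  have hWc : ContinuousOn (fun y => v y * θ y ^ w) (Set.Icc 0 1) :=
    hvc.mul (hθc.rpow_const fun y hy => Or.inl (hθpos y hy).ne')
  have hRHSc : ContinuousOn (fun y => (s / 2) *
      (θ y ^ β * θ' y ^ 2 / (v y * θ y ^ (1 + η)) + v y * θ y ^ w)) (Set.Icc 0 1) :=
    continuousOn_const.mul (hFc.add hWc)
  have hint2 : (∫ y in (0:ℝ)..1, |g' y|) ≤ (s / 2) *
      ((∫ y in (0:ℝ)..1, θ y ^ β * θ' y ^ 2 / (v y * θ y ^ (1 + η)))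
        + ∫ y in (0:ℝ)..1, v y * θ y ^ w) := by
    have hptw : ∀ y ∈ Set.Icc (0:ℝ) 1, |g' y| ≤ (s / 2) *
        (θ y ^ β * θ' y ^ 2 / (v y * θ y ^ (1 + η)) + v y * θ y ^ w) := by
      intro y hy
      have h1 : |g' y| = s * (θ y ^ (s - 1) * |θ' y|) := by
        rw [hg'def]
        rw [abs_mul, abs_mul, abs_of_pos hs,
          abs_of_pos (Real.rpow_pos_of_pos (hθpos y hy) _)]
        ring
      rw [h1]
      exact pt_bound β η s w (θ y) (θ' y) (v y) (hθpos y hy) (hvpos y hy) hs hw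
    calc (∫ y in (0:ℝ)..1, |g' y|)
        ≤ ∫ y in (0:ℝ)..1, (s / 2) *
            (θ y ^ β * θ' y ^ 2 / (v y * θ y ^ (1 + η)) + v y * θ y ^ w) :=
          integral_mono_on zero_le_one habs_int (hu ▸ hRHSc).intervalIntegrable hptw
      _ = (s / 2) * ((∫ y in (0:ℝ)..1, θ y ^ β * θ' y ^ 2 / (v y * θ y ^ (1 + η)))
            + ∫ y in (0:ℝ)..1, v y * θ y ^ w) := by
          rw [integral_const_mul, integral_add (hu ▸ hFc).intervalIntegrable
            (hu ▸ hWc).intervalIntegrable]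
  have hx₀s : θ x₀ ^ s ≤ E ^ s :=
    Real.rpow_le_rpow (hθpos x₀ hx₀).le hθ₀E hs.le
  linarith [hftc ▸ habs]

lemma main_bound (E V c₀ β : ℝ)
    (hE : 0 < E) (hV : 0 < V) (hc₀ : 0 < c₀) (hβ : 0 < β) :
    ∃ C' > 0, ∀ θ θ' v : ℝ → ℝ,
      (∀ x ∈ Set.Icc (0:ℝ) 1, HasDerivAt θ (θ' x) x) →
      ContinuousOn θ' (Set.Icc 0 1) →
      (∀ x ∈ Set.Icc (0:ℝ) 1, 0 < θ x) →
      (∫ x in (0:ℝ)..1, θ x) ≤ E →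
      ContinuousOn v (Set.Icc 0 1) →
      (∀ x ∈ Set.Icc (0:ℝ) 1, c₀ ≤ v x) →
      (∫ x in (0:ℝ)..1, v x) ≤ V →
      (∀ x ∈ Set.Icc (0:ℝ) 1,
        θ x ≤ C' * (1 + ∫ y in (0:ℝ)..1,
            θ y ^ β * θ' y ^ 2 / (v y * θ y ^ (1 + min 1 β / 2)))) := by
  set η : ℝ := min 1 β / 2 with hηdef
  have hη0 : 0 < η := by
    have : 0 < min 1 β := lt_min one_pos hβ
    positivity
  have hηβ : η < β := by
    have h1 : min 1 β ≤ β := min_le_right _ _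
    have : η ≤ β / 2 := by rw [hηdef]; linarith
    linarith
  have hu : Set.uIcc (0:ℝ) 1 = Set.Icc 0 1 := Set.uIcc_of_le zero_le_one
  rcases le_or_gt β (1 + η) with hcase | hcase
  · -- case β ≤ 1 + η : use s = 1, w = 1 + η - β =: r
    set r : ℝ := 1 + η - β with hrdef
    have hr0 : 0 ≤ r := by linarith
    have hr1 : r < 1 := by linarith
    set K₀ : ℝ := max 1 (V ^ (1 / (1 - r))) with hK₀def
    have hK₀1 : (1:ℝ) ≤ K₀ := le_max_left _ _
    have hK₀0 : 0 < K₀ := lt_of_lt_of_le one_pos hK₀1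
    set c : ℝ := (V / 2) * K₀ ^ r with hcdef
    have hc0 : 0 ≤ c := by positivity
    refine ⟨2 * E + 2 * c + 1, by positivity, ?_⟩
    intro θ θ' v hθd hθ'c hθpos hθE hvc hvlb hvV
    set D : ℝ := ∫ y in (0:ℝ)..1, θ y ^ β * θ' y ^ 2 / (v y * θ y ^ (1 + η)) with hDdef
    have hvpos : ∀ y ∈ Set.Icc (0:ℝ) 1, 0 < v y := fun y hy => hc₀.trans_le (hvlb y hy)
    have hD0 : 0 ≤ D := by
      apply intervalIntegral.integral_nonneg zero_le_one
      intro y hy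
      have := hθpos y hy
      have := hvpos y hy
      positivity
    have hθc : ContinuousOn θ (Set.Icc 0 1) := fun y hy =>
      (hθd y hy).continuousAt.continuousWithinAt
    obtain ⟨x₁, hx₁, hmax⟩ := isCompact_Icc.exists_isMaxOn (Set.nonempty_Icc.2 zero_le_one) hθc
    rw [isMaxOn_iff] at hmax
    set M : ℝ := θ x₁ with hMdef
    have hM0 : 0 < M := hθpos x₁ hx₁
    -- bound ∫ v θ^r by V M^r
    have hWle : (∫ y in (0:ℝ)..1, v y * θ y ^ r) ≤ V * M ^ r := by
      have hWc : ContinuousOn (fun y => v y * θ y ^ r) (Set.Icc 0 1) :=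
        hvc.mul (hθc.rpow_const fun y hy => Or.inl (hθpos y hy).ne')
      have hvint : IntervalIntegrable v MeasureTheory.volume 0 1 :=
        (hu ▸ hvc).intervalIntegrable
      calc (∫ y in (0:ℝ)..1, v y * θ y ^ r) ≤ ∫ y in (0:ℝ)..1, v y * M ^ r := by
            apply integral_mono_on zero_le_one (hu ▸ hWc).intervalIntegrable
              (hvint.mul_const _)
            intro y hy
            exact mul_le_mul_of_nonneg_left
              (Real.rpow_le_rpow (hθpos y hy).le (hmax y hy) hr0) (hvpos y hy).le
        _ = (∫ y in (0:ℝ)..1, v y) * M ^ r := integral_mul_const _ _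
        _ ≤ V * M ^ r := by
            apply mul_le_mul_of_nonneg_right hvV (Real.rpow_nonneg hM0.le _)
    have hcore := core_bound E c₀ β η 1 r hc₀ one_pos (by rw [hrdef]; ring)
      θ θ' v hθd hθ'c hθpos hθE hvc hvlb x₁ hx₁
    rw [Real.rpow_one, Real.rpow_one] at hcore
    -- Young absorption : (V * M^r)/2 ≤ c + M/2
    have hyoung : V * M ^ r / 2 ≤ c + M / 2 := by
      rcases le_total M K₀ with h | h
      · have : M ^ r ≤ K₀ ^ r := Real.rpow_le_rpow hM0.le h hr0
        have : V * M ^ r / 2 ≤ c := by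
          rw [hcdef]
          nlinarith [Real.rpow_nonneg hM0.le r]
        linarith
      · have h1r : (0:ℝ) < 1 - r := by linarith
        have hVM : V ≤ M ^ (1 - r) := by
          calc V = (V ^ (1 / (1 - r))) ^ (1 - r) := by
                rw [← Real.rpow_mul hV.le, one_div_mul_cancel h1r.ne', Real.rpow_one]
            _ ≤ K₀ ^ (1 - r) :=
                Real.rpow_le_rpow (Real.rpow_nonneg hV.le _) (le_max_right _ _) h1r.le
            _ ≤ M ^ (1 - r) := Real.rpow_le_rpow hK₀0.le h h1r.le
        have hMM : M ^ (1 - r) * M ^ r = M := by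
          rw [← Real.rpow_add hM0]; norm_num
        have : V * M ^ r ≤ M := by
          calc V * M ^ r ≤ M ^ (1 - r) * M ^ r :=
                mul_le_mul_of_nonneg_right hVM (Real.rpow_nonneg hM0.le _)
            _ = M := hMM
        linarith
    have hMle : M ≤ 2 * E + 2 * c + D := by linarith
    intro x hx
    have : θ x ≤ M := hmax x hx
    nlinarith [mul_nonneg (by positivity : (0:ℝ) ≤ 2 * E + 2 * c) hD0]
  · -- case 1 + η < β : use s = (β + 1 - η)/2, w = 0
    set s : ℝ := (β + 1 - η) / 2 with hsdef
    have hs1 : 1 < s := by rw [hsdef]; linarith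
    have hs0 : 0 < s := lt_trans one_pos hs1
    set a : ℝ := E ^ s + s / 2 * V with hadef
    have ha0 : 0 < a := by positivity
    refine ⟨1 + a + s / 2, by positivity, ?_⟩
    intro θ θ' v hθd hθ'c hθpos hθE hvc hvlb hvV
    set D : ℝ := ∫ y in (0:ℝ)..1, θ y ^ β * θ' y ^ 2 / (v y * θ y ^ (1 + η)) with hDdef
    have hvpos : ∀ y ∈ Set.Icc (0:ℝ) 1, 0 < v y := fun y hy => hc₀.trans_le (hvlb y hy)
    have hD0 : 0 ≤ D := by
      apply intervalIntegral.integral_nonneg zero_le_one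
      intro y hy
      have := hθpos y hy
      have := hvpos y hy
      positivity
    have hθc : ContinuousOn θ (Set.Icc 0 1) := fun y hy =>
      (hθd y hy).continuousAt.continuousWithinAt
    obtain ⟨x₁, hx₁, hmax⟩ := isCompact_Icc.exists_isMaxOn (Set.nonempty_Icc.2 zero_le_one) hθc
    rw [isMaxOn_iff] at hmax
    set M : ℝ := θ x₁ with hMdef
    have hM0 : 0 < M := hθpos x₁ hx₁
    have hcore := core_bound E c₀ β η s 0 hc₀ hs0 (by rw [hsdef]; ring)
      θ θ' v hθd hθ'c hθpos hθE hvc hvlb x₁ hx₁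
    have hW0 : (∫ y in (0:ℝ)..1, v y * θ y ^ (0:ℝ)) ≤ V := by
      have : (∫ y in (0:ℝ)..1, v y * θ y ^ (0:ℝ)) = ∫ y in (0:ℝ)..1, v y := by
        apply intervalIntegral.integral_congr
        intro y hy
        simp [Real.rpow_zero]
      rw [this]; exact hvV
    have hMs : M ^ s ≤ a + s / 2 * D := by
      rw [hadef]
      nlinarith
    have hMle : M ≤ 1 + a + s / 2 * D := by
      have h1s : 0 < 1 / s := by positivity
      have hM' : M = (M ^ s) ^ (1 / s) := by
        rw [← Real.rpow_mul hM0.le, mul_one_div, div_self hs0.ne', Real.rpow_one]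
      have hz0 : (0:ℝ) ≤ a + s / 2 * D := by positivity
      have h2 : (M ^ s) ^ (1 / s) ≤ (a + s / 2 * D) ^ (1 / s) :=
        Real.rpow_le_rpow (Real.rpow_nonneg hM0.le _) hMs h1s.le
      have h3 : (a + s / 2 * D) ^ (1 / s) ≤ 1 + (a + s / 2 * D) := by
        rcases le_total (a + s / 2 * D) 1 with h | h
        · have := Real.rpow_le_one hz0 h h1s.le
          linarith
        · have := Real.rpow_le_rpow_of_exponent_le h
            (by rw [div_le_one hs0]; linarith : 1 / s ≤ 1)
          rw [Real.rpow_one] at this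
          linarith
      calc M = (M ^ s) ^ (1 / s) := hM'
        _ ≤ (a + s / 2 * D) ^ (1 / s) := h2
        _ ≤ 1 + (a + s / 2 * D) := h3
        _ = 1 + a + s / 2 * D := by ring
    intro x hx
    have : θ x ≤ M := hmax x hx
    have hexp : (1 + a + s / 2) * (1 + D) = 1 + a + s / 2 * D + (s / 2 + D + a * D) := by
      ring
    have h1 : 0 ≤ a * D := mul_nonneg ha0.le hD0
    clear_value s a D M
    linarith


theorem max_temperature_estimate (E V c₀ β : ℝ)
    (hE : 0 < E) (hV : 0 < V) (hc₀ : 0 < c₀) (hβ : 0 < β) :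
    ∃ C > 0, ∃ C' > 0, ∀ θ θ' v : ℝ → ℝ,
      (∀ x ∈ Set.Icc (0:ℝ) 1, HasDerivAt θ (θ' x) x) →
      ContinuousOn θ' (Set.Icc 0 1) →
      (∀ x ∈ Set.Icc (0:ℝ) 1, 0 < θ x) →
      (∫ x in (0:ℝ)..1, θ x) ≤ E →
      ContinuousOn v (Set.Icc 0 1) →
      (∀ x ∈ Set.Icc (0:ℝ) 1, c₀ ≤ v x) →
      (∫ x in (0:ℝ)..1, v x) ≤ V →
      (∀ x ∈ Set.Icc (0:ℝ) 1,
        θ x ≤ C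
          + C * (∫ y in (0:ℝ)..1,
              θ y ^ β * θ' y ^ 2 / (v y * θ y ^ (1 + min 1 β / 2)))
          + C * ⨆ y : Set.Icc (0:ℝ) 1, θ y ^ (1 + min 1 β / 2 - β)) ∧
      (∀ x ∈ Set.Icc (0:ℝ) 1,
        θ x ≤ C' * (1 + ∫ y in (0:ℝ)..1,
            θ y ^ β * θ' y ^ 2 / (v y * θ y ^ (1 + min 1 β / 2)))) := by
  obtain ⟨C', hC'0, hC'⟩ := main_bound E V c₀ β hE hV hc₀ hβ
  refine ⟨C', hC'0, C', hC'0, ?_⟩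
  intro θ θ' v hθd hθ'c hθpos hθE hvc hvlb hvV
  have hmain := hC' θ θ' v hθd hθ'c hθpos hθE hvc hvlb hvV
  refine ⟨?_, hmain⟩
  intro x hx
  set D : ℝ := ∫ y in (0:ℝ)..1, θ y ^ β * θ' y ^ 2 / (v y * θ y ^ (1 + min 1 β / 2)) with hD
  have hD0 : 0 ≤ D := by
    apply intervalIntegral.integral_nonneg zero_le_one
    intro y hy
    have := hθpos y hy
    have := hc₀.trans_le (hvlb y hy)
    positivity
  have hS0 : 0 ≤ ⨆ y : Set.Icc (0:ℝ) 1, θ y ^ (1 + min 1 β / 2 - β) :=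
    Real.iSup_nonneg fun y => Real.rpow_nonneg (hθpos y.1 y.2).le _
  have h1 := hmain x hx
  have h2 : 0 ≤ C' * ⨆ y : Set.Icc (0:ℝ) 1, θ y ^ (1 + min 1 β / 2 - β) :=
    mul_nonneg hC'0.le hS0
  nlinarith
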